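/- Let Ω ⊂ ℝⁿ be a domain and p : cl(Ω) → ℝ a continuous function with inf_Ω p > 1. Define the modular ρ_p(h) = ∫_Ω |h(x)|^{p(x)} / p(x) dx for measurable h : Ω → ℝⁿ, where |·| is the Euclidean norm on ℝⁿ. Then ρ_p is uniformly convex: for every ε > 0 there exists δ with 0 < δ < 1 such that for every pair of measurable functions f, g : Ω → ℝⁿ with ρ_p(f) < ∞ and ρ_p(g) < ∞, if ρ_p((f − g)/2) > ε · (ρ_p(f) + ρ_p(g))/2, then ρ_p((f + g)/2) < (1 − δ) · (ρ_p(f) + ρ_p(g))/2. -/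

import Mathlib

open MeasureTheory ENNReal Filter
open scoped NNReal
open Set

section PW
variable {V : Type*} [NormedAddCommGroup V] [InnerProductSpace ℝ V]

lemma avg_rpow_le {s t : ℝ} (hs : 0 ≤ s) (ht : 0 ≤ t) {p : ℝ} (hp : 1 ≤ p) :
    ((s + t) / 2) ^ p ≤ (s ^ p + t ^ p) / 2 := by
  have h := (convexOn_rpow hp).2 (mem_Ici.2 hs) (mem_Ici.2 ht)
      (by norm_num : (0:ℝ) ≤ 1/2) (by norm_num : (0:ℝ) ≤ 1/2) (by norm_num)
  simp only [smul_eq_mul] at h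
  calc ((s+t)/2) ^ p = (1/2 * s + 1/2 * t) ^ p := by ring_nf
    _ ≤ 1/2 * s ^ p + 1/2 * t ^ p := h
    _ = (s ^ p + t ^ p) / 2 := by ring

lemma rpow_superadd {x y : ℝ} (hx : 0 ≤ x) (hy : 0 ≤ y) {p : ℝ} (hp : 1 ≤ p) :
    x ^ p + y ^ p ≤ (x + y) ^ p := by
  have h := NNReal.add_rpow_le_rpow_add (x.toNNReal) (y.toNNReal) hp
  have h2 : ((x.toNNReal : ℝ)) = x := Real.coe_toNNReal x hx
  have h3 : ((y.toNNReal : ℝ)) = y := Real.coe_toNNReal y hy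
  have := (NNReal.coe_le_coe).2 h
  push_cast [NNReal.coe_rpow, h2, h3] at this
  linarith

lemma sq_rpow (x : ℝ) {p : ℝ} (hx : 0 ≤ x) : (x ^ 2) ^ (p/2) = x ^ p := by
  rw [← Real.rpow_natCast x 2, ← Real.rpow_mul hx]
  norm_num
  congr 1
  ring

lemma para_half (a b : V) :
    ‖(2⁻¹:ℝ) • (a+b)‖ ^ (2:ℕ) + ‖(2⁻¹:ℝ) • (a-b)‖ ^ (2:ℕ) = (‖a‖^(2:ℕ) + ‖b‖^(2:ℕ))/2 := by
  have h := parallelogram_law_with_norm ℝ a b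
  have e1 : ‖(2⁻¹:ℝ) • (a+b)‖ = 2⁻¹ * ‖a+b‖ := by rw [norm_smul]; simp
  have e2 : ‖(2⁻¹:ℝ) • (a-b)‖ = 2⁻¹ * ‖a-b‖ := by rw [norm_smul]; simp
  rw [e1, e2]; ring_nf; ring_nf at h; nlinarith [h]

lemma clarkson {p : ℝ} (hp : 2 ≤ p) (a b : V) :
    ‖(2⁻¹:ℝ) • (a+b)‖ ^ p + ‖(2⁻¹:ℝ) • (a-b)‖ ^ p ≤ (‖a‖ ^ p + ‖b‖ ^ p) / 2 := by
  set X := ‖(2⁻¹:ℝ) • (a+b)‖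
  set Y := ‖(2⁻¹:ℝ) • (a-b)‖
  have hX : 0 ≤ X := norm_nonneg _
  have hY : 0 ≤ Y := norm_nonneg _
  have hp2 : (1:ℝ) ≤ p/2 := by linarith
  have step1 : X ^ p + Y ^ p ≤ (X^(2:ℕ) + Y^(2:ℕ)) ^ (p/2) := by
    have := rpow_superadd (x := X^(2:ℕ)) (y := Y^(2:ℕ)) (by positivity) (by positivity) hp2
    rwa [sq_rpow _ hX, sq_rpow _ hY] at this
  have step2 : (X^(2:ℕ) + Y^(2:ℕ)) ^ (p/2) = ((‖a‖^(2:ℕ) + ‖b‖^(2:ℕ))/2) ^ (p/2) := by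
    rw [para_half]
  have step3 : ((‖a‖^(2:ℕ) + ‖b‖^(2:ℕ))/2) ^ (p/2) ≤ ((‖a‖^(2:ℕ))^(p/2) + (‖b‖^(2:ℕ))^(p/2))/2 :=
    avg_rpow_le (by positivity) (by positivity) hp2
  rw [sq_rpow _ (norm_nonneg a), sq_rpow _ (norm_nonneg b)] at step3
  calc X ^ p + Y ^ p ≤ _ := step1
    _ = _ := step2
    _ ≤ _ := step3

lemma exists_gamma {q lam : ℝ} (hq : 1 < q) (hq2 : q ≤ 2) (hlam0 : 0 < lam) (hlam1 : lam < 1) :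
    ∃ γ : ℝ, 0 < γ ∧ ∀ p ∈ Icc q 2, ∀ t ∈ Icc (0:ℝ) (1-lam),
      ((1+t)/2) ^ p + γ ≤ (1 + t ^ p) / 2 := by
  set K : Set (ℝ × ℝ) := Icc (0:ℝ) (1-lam) ×ˢ Icc q 2 with hK
  have hKc : IsCompact K := isCompact_Icc.prod isCompact_Icc
  have hKne : K.Nonempty :=
    ⟨(0, q), Set.mk_mem_prod ⟨le_refl _, by linarith⟩ ⟨le_refl _, hq2⟩⟩
  set F : ℝ × ℝ → ℝ := fun z => (1 + z.1 ^ z.2) / 2 - ((1 + z.1) / 2) ^ z.2 with hF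
  have hcont : ContinuousOn F K := by
    intro z hz
    have hz2 : 0 < z.2 := by
      have := hz.2.1
      linarith
    have c1 : ContinuousAt (fun w : ℝ × ℝ => w.1 ^ w.2) z :=
      Real.continuousAt_rpow z (Or.inr hz2)
    have c2 : ContinuousAt (fun w : ℝ × ℝ => ((1 + w.1) / 2) ^ w.2) z := by
      have hmap : ContinuousAt (fun w : ℝ × ℝ => (((1 + w.1) / 2), w.2)) z := by
        fun_prop
      have hbase : ((1 + z.1) / 2) ≠ 0 := by
        have := hz.1.1
        intro h; nlinarith
      have h5 := Real.continuousAt_rpow (((1 + z.1) / 2), z.2) (Or.inl hbase)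
      exact ContinuousAt.comp (g := fun w : ℝ × ℝ => w.1 ^ w.2)
        (f := fun w : ℝ × ℝ => (((1 + w.1) / 2), w.2)) h5 hmap
    exact ((continuousAt_const.add c1).div_const 2 |>.sub c2).continuousWithinAt
  obtain ⟨z₀, hz₀K, hmin⟩ := hKc.exists_isMinOn hKne hcont
  refine ⟨F z₀, ?_, ?_⟩
  · obtain ⟨⟨ht0, ht1⟩, ⟨hp1, hp2⟩⟩ := hz₀K
    have hp1' : 1 < z₀.2 := lt_of_lt_of_le hq hp1
    have hne : (1:ℝ) ≠ z₀.1 := by intro h; rw [← h] at ht1; linarith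
    have h := (strictConvexOn_rpow hp1').2 (mem_Ici.2 (le_of_lt one_pos)) (mem_Ici.2 ht0)
        hne (by norm_num : (0:ℝ) < 1/2) (by norm_num : (0:ℝ) < 1/2) (by norm_num)
    simp only [smul_eq_mul, Real.one_rpow] at h
    have e : (1/2 * 1 + 1/2 * z₀.1) = (1 + z₀.1)/2 := by ring
    rw [e] at h
    simp only [hF]
    linarith
  · intro p hp t ht
    have : F (t, p) ≥ F z₀ := hmin (Set.mk_mem_prod ht hp)
    simp only [hF] at this ⊢
    linarith



set_option maxHeartbeats 1000000 in
/-- Case A of the scalar estimate: norms well separated. -/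
lemma scalar_caseA {q γ δ p s t X : ℝ} (hq : 1 < q) (hγ0 : 0 < γ) (hδγ : δ ≤ γ)
    (lam : ℝ) (hlam0 : 0 < lam)
    (hγp : ((1 + t/s)/2) ^ p + γ ≤ (1 + (t/s) ^ p) / 2)
    (hqp : q ≤ p) (ht0 : 0 ≤ t) (hs' : 0 < s) (hba : t ≤ s) (hX0 : 0 ≤ X)
    (hXst : X ≤ (s + t)/2) :
    X ^ p ≤ (1 - δ) * ((s ^ p + t ^ p) / 2) := by
  have hs0 : 0 ≤ s := le_of_lt hs'
  have hp1 : 1 < p := lt_of_lt_of_le hq hqp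
  have hp0 : 0 < p := by linarith
  have hM0 : (0:ℝ) ≤ (s ^ p + t ^ p) / 2 := by positivity
  have htps : t ^ p ≤ s ^ p := Real.rpow_le_rpow ht0 hba (le_of_lt hp0)
  have hsp0 : 0 < s ^ p := Real.rpow_pos_of_pos hs' p
  have hτ0 : 0 ≤ t / s := div_nonneg ht0 hs0
  have hst : (s + t)/2 = s * ((1 + t/s)/2) := by field_simp
  have hts' : t = s * (t/s) := by field_simp
  have e1 : ((s + t)/2) ^ p = s ^ p * ((1 + t/s)/2) ^ p := by
    rw [hst, Real.mul_rpow hs0 (by positivity)]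
  have e2 : t ^ p = s ^ p * (t/s) ^ p := by
    nth_rewrite 1 [hts']
    rw [Real.mul_rpow hs0 hτ0]
  have hXp : X ^ p ≤ ((s + t)/2) ^ p := Real.rpow_le_rpow hX0 hXst (le_of_lt hp0)
  rw [e1] at hXp
  have hXp2 : X ^ p ≤ s ^ p * ((1 + (t/s) ^ p)/2 - γ) := by
    calc X ^ p ≤ s ^ p * ((1 + t/s)/2) ^ p := hXp
      _ ≤ s ^ p * ((1 + (t/s) ^ p)/2 - γ) := by
          apply mul_le_mul_of_nonneg_left _ (le_of_lt hsp0)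
          linarith
  have hMτ : (s ^ p + t ^ p) / 2 = s ^ p * ((1 + (t/s) ^ p)/2) := by
    rw [e2]; ring
  have hMs : (s ^ p + t ^ p) / 2 ≤ s ^ p := by linarith
  have c1 : X ^ p ≤ (s ^ p + t ^ p)/2 - γ * s ^ p := by
    have e13 : s ^ p * ((1 + (t/s) ^ p)/2 - γ)
        = s ^ p * ((1 + (t/s) ^ p)/2) - γ * s ^ p := by ring
    rw [e13, ← hMτ] at hXp2
    linarith
  have c2 : γ * ((s ^ p + t ^ p)/2) ≤ γ * s ^ p :=
    mul_le_mul_of_nonneg_left hMs (le_of_lt hγ0)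
  have c3 : (1 - γ) * ((s ^ p + t ^ p)/2) ≤ (1 - δ) * ((s ^ p + t ^ p)/2) :=
    mul_le_mul_of_nonneg_right (by linarith) hM0
  nlinarith [c1, c2, c3]

set_option maxHeartbeats 1000000 in
/-- Case B of the scalar estimate: norms close, difference large. -/
lemma scalar_caseB {q ε θ δ p s t d X : ℝ} (hq : 1 < q) (hε : 0 < ε) (hε1 : ε < 1)
    (hθdef : (ε/2 : ℝ) ^ (1/q : ℝ) = θ) (hθ0 : 0 < θ) (hθ1 : θ < 1)
    (hδ0 : 0 < δ) (hδθ : δ ≤ θ^2/8) (hδhalf : δ ≤ 1/2)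
    (hqp : q ≤ p) (hp2 : p ≤ 2) (ht0 : 0 ≤ t) (hs' : 0 < s) (hba : t ≤ s)
    (hd0 : 0 ≤ d) (hX0 : 0 ≤ X)
    (hpar : X^(2:ℕ) + d^(2:ℕ) ≤ (s^(2:ℕ) + t^(2:ℕ))/2)
    (hcase : (1 - θ^2/8) * s < t)
    (hyp : ε * ((s ^ p + t ^ p) / 2) < d ^ p) :
    X ^ p ≤ (1 - δ) * ((s ^ p + t ^ p) / 2) := by
  have hθsq : θ^2 < 1 := by nlinarith
  have hθsq0 : 0 < θ^2 := by positivity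
  have hs0 : 0 ≤ s := le_of_lt hs'
  have hp1 : 1 < p := lt_of_lt_of_le hq hqp
  have hp0 : 0 < p := by linarith
  have htps : t ^ p ≤ s ^ p := Real.rpow_le_rpow ht0 hba (le_of_lt hp0)
  have hsp0 : 0 < s ^ p := Real.rpow_pos_of_pos hs' p
  have hθs : (θ * s) ^ p < d ^ p := by
    have e3 : (θ * s) ^ p = θ ^ p * s ^ p := Real.mul_rpow (le_of_lt hθ0) hs0
    have e4 : θ ^ p = (ε/2) ^ (p/q : ℝ) := by
      rw [← hθdef, ← Real.rpow_mul (by linarith : (0:ℝ) ≤ ε/2)]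
      congr 1
      field_simp
    have e5 : (ε/2 : ℝ) ^ (p/q : ℝ) ≤ (ε/2) ^ (1:ℝ) := by
      apply Real.rpow_le_rpow_of_exponent_ge (by linarith) (by linarith)
      rw [le_div_iff₀ (by linarith : (0:ℝ) < q)]
      linarith
    rw [Real.rpow_one] at e5
    have h6 : (θ * s)^p ≤ (ε/2) * s ^ p := by
      rw [e3, e4]
      exact mul_le_mul_of_nonneg_right e5 (le_of_lt hsp0)
    calc (θ * s) ^ p ≤ (ε/2) * s ^ p := h6
      _ ≤ ε * ((s ^ p + t ^ p) / 2) := by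
          linarith [mul_nonneg (le_of_lt hε) (Real.rpow_nonneg ht0 p)]
      _ < d ^ p := hyp
  have hds : θ * s < d := by
    by_contra h
    push_neg at h
    exact absurd (Real.rpow_le_rpow hd0 h (le_of_lt hp0)) (not_le.2 hθs)
  have hX2 : X ^ (2:ℕ) ≤ (1 - θ^2) * s ^ (2:ℕ) := by
    have h7 : (θ * s)^(2:ℕ) < d ^ (2:ℕ) := by
      have h7' := mul_self_lt_mul_self (by positivity : (0:ℝ) ≤ θ * s) hds
      calc (θ * s)^(2:ℕ) = (θ * s) * (θ * s) := sq (θ*s) ▸ (sq (θ*s)).symm ▸ by ring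
        _ < d * d := h7'
        _ = d ^ (2:ℕ) := by ring
    nlinarith [h7, hpar, mul_self_le_mul_self ht0 hba]
  have hθ2pos : 0 < 1 - θ^2 := by linarith
  have hc0 : (0:ℝ) ≤ Real.sqrt (1 - θ^2) := Real.sqrt_nonneg _
  have hc2 : (Real.sqrt (1 - θ^2)) ^ (2:ℕ) = 1 - θ^2 := Real.sq_sqrt (le_of_lt hθ2pos)
  have hXc : X ≤ Real.sqrt (1 - θ^2) * s := by
    have h2 : X ^ (2:ℕ) ≤ (Real.sqrt (1 - θ^2) * s) ^ (2:ℕ) := by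
      rw [mul_pow, hc2]
      exact hX2
    exact le_of_pow_le_pow_left₀ (by norm_num) (by positivity) h2
  have hXpc : X ^ p ≤ (Real.sqrt (1 - θ^2) * s) ^ p :=
    Real.rpow_le_rpow hX0 hXc (le_of_lt hp0)
  have e6 : (Real.sqrt (1 - θ^2) * s) ^ p = (Real.sqrt (1 - θ^2)) ^ p * s ^ p :=
    Real.mul_rpow hc0 hs0
  have e7 : (Real.sqrt (1 - θ^2)) ^ p = (1 - θ^2) ^ (p/2 : ℝ) := by
    rw [Real.sqrt_eq_rpow, ← Real.rpow_mul (le_of_lt hθ2pos)]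
    congr 1
    ring
  have e8 : (1 - θ^2 : ℝ) ^ (p/2 : ℝ) ≤ (1 - θ^2) ^ (1/2 : ℝ) := by
    apply Real.rpow_le_rpow_of_exponent_ge hθ2pos (by linarith)
    linarith
  have e9 : (1 - θ^2 : ℝ) ^ (1/2 : ℝ) ≤ 1 - θ^2/4 := by
    rw [← Real.sqrt_eq_rpow]
    have h8 := Real.sqrt_le_sqrt (by nlinarith [sq_nonneg (θ^2)] : (1 - θ^2 : ℝ) ≤ (1 - θ^2/4)^2)
    rwa [Real.sqrt_sq (by linarith)] at h8
  have hXfin : X ^ p ≤ (1 - θ^2/4) * s ^ p := by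
    calc X ^ p ≤ (Real.sqrt (1 - θ^2)) ^ p * s ^ p := by rw [← e6]; exact hXpc
      _ ≤ (1 - θ^2/4) * s ^ p :=
          mul_le_mul_of_nonneg_right (by linarith [e7 ▸ le_trans e8 e9]) (le_of_lt hsp0)
  have htlower : ((1 - θ^2/8) * s) ^ p ≤ t ^ p :=
    Real.rpow_le_rpow (mul_nonneg (by linarith) hs0) (le_of_lt hcase) (le_of_lt hp0)
  have e10 : ((1 - θ^2/8) * s) ^ p = (1 - θ^2/8) ^ p * s ^ p :=
    Real.mul_rpow (by linarith) hs0
  have e11 : ((1 - θ^2/8):ℝ) ^ (2:ℝ) ≤ (1 - θ^2/8) ^ p :=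
    Real.rpow_le_rpow_of_exponent_ge (by linarith) (by linarith) hp2
  have e12 : ((1 - θ^2/8):ℝ) ^ (2:ℝ) = (1 - θ^2/8)^(2:ℕ) := by
    rw [← Real.rpow_natCast]
    norm_num
  have hMlow : (1 - θ^2/8) * s ^ p ≤ (s ^ p + t ^ p) / 2 := by
    have ht2 : (1 - θ^2/8)^(2:ℕ) * s ^ p ≤ t ^ p := by
      rw [← e12]
      calc ((1 - θ^2/8):ℝ) ^ (2:ℝ) * s ^ p ≤ (1 - θ^2/8) ^ p * s ^ p :=
            mul_le_mul_of_nonneg_right e11 (le_of_lt hsp0)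
        _ = ((1 - θ^2/8) * s) ^ p := e10.symm
        _ ≤ t ^ p := htlower
    have expand : (1-θ^2/8)^(2:ℕ) * s^p = s^p - (θ^2/4)*s^p + (θ^4/64)*s^p := by ring
    linarith [ht2, mul_nonneg (le_of_lt hsp0) (by positivity : (0:ℝ) ≤ θ^4/64)]
  have hδ1 : (0:ℝ) ≤ 1 - δ := by linarith
  have c4 : (1 - θ^2/4) ≤ (1 - δ) * (1 - θ^2/8) := by
    nlinarith [mul_nonneg (le_of_lt hδ0) (sq_nonneg θ)]
  have c5 : (1 - θ^2/4) * s ^ p ≤ (1 - δ) * ((1 - θ^2/8) * s ^ p) := by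
    rw [← mul_assoc]
    exact mul_le_mul_of_nonneg_right c4 (le_of_lt hsp0)
  have c6 : (1 - δ) * ((1 - θ^2/8) * s ^ p) ≤ (1 - δ) * ((s ^ p + t ^ p)/2) :=
    mul_le_mul_of_nonneg_left hMlow hδ1
  linarith

/-- Scalar core of the pointwise estimate, `q ≤ p ≤ 2`. -/
lemma key_scalar {q : ℝ} (hq : 1 < q) (hq2 : q ≤ 2) {ε : ℝ} (hε : 0 < ε) (hε1 : ε < 1) :
    ∃ δ : ℝ, 0 < δ ∧ δ ≤ 1/2 ∧ ∀ p : ℝ, q ≤ p → p ≤ 2 → ∀ s t d X : ℝ,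
      0 ≤ t → t ≤ s → 0 ≤ d → 0 ≤ X →
      X ≤ (s + t)/2 → X^(2:ℕ) + d^(2:ℕ) ≤ (s^(2:ℕ) + t^(2:ℕ))/2 →
      ε * ((s ^ p + t ^ p) / 2) < d ^ p →
      X ^ p ≤ (1 - δ) * ((s ^ p + t ^ p) / 2) := by
  have hθ0 : (0:ℝ) < (ε/2) ^ (1/q : ℝ) := Real.rpow_pos_of_pos (by linarith) _
  have hθ1 : (ε/2 : ℝ) ^ (1/q : ℝ) < 1 :=
    Real.rpow_lt_one (by linarith) (by linarith) (by positivity)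
  generalize hθdef : ((ε/2 : ℝ) ^ (1/q : ℝ)) = θ at hθ0 hθ1
  have hlam0 : (0:ℝ) < θ^2/8 := by positivity
  have hθsq : θ^2 < 1 := by nlinarith
  have hlam1 : θ^2/8 < 1 := by linarith
  obtain ⟨γ, hγ0, hγ⟩ := exists_gamma hq hq2 hlam0 hlam1
  refine ⟨min (min ε γ) (min (θ^2/8) (1/2)), by positivity,
    le_trans (min_le_right _ _) (min_le_right _ _), ?_⟩
  intro p hqp hp2 s t d X ht0 hba hd0 hX0 hXst hpar hyp
  have hs0 : 0 ≤ s := le_trans ht0 hba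
  have hp1 : 1 < p := lt_of_lt_of_le hq hqp
  have hp0 : 0 < p := by linarith
  -- s > 0
  have hs' : 0 < s := by
    rcases hs0.lt_or_eq with h | h
    · exact h
    · exfalso
      have hts : t = 0 := by linarith
      have hd2 : d^(2:ℕ) ≤ 0 := by
        rw [hts, ← h] at hpar
        nlinarith [sq_nonneg X]
      have hd00 : d = 0 := by nlinarith [sq_nonneg d]
      rw [hd00, Real.zero_rpow (ne_of_gt hp0)] at hyp
      nlinarith [Real.rpow_nonneg hs0 p, Real.rpow_nonneg ht0 p]
  rcases le_or_gt t ((1 - θ^2/8) * s) with hcase | hcase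
  · -- case A
    have hτ1 : t / s ≤ 1 - θ^2/8 := by
      rw [div_le_iff₀ hs']
      linarith [hcase]
    have hγp := hγ p ⟨hqp, hp2⟩ (t/s) ⟨div_nonneg ht0 hs0, hτ1⟩
    exact scalar_caseA hq hγ0 (le_trans (min_le_left _ _) (min_le_right _ _))
      (θ^2/8) hlam0 hγp hqp ht0 hs' hba hX0 hXst
  · -- case B
    exact scalar_caseB hq hε hε1 hθdef hθ0 hθ1 (by positivity)
      (le_trans (min_le_right _ _) (min_le_left _ _))
      (le_trans (min_le_right _ _) (min_le_right _ _))
      hqp hp2 ht0 hs' hba hd0 hX0 hpar hcase hyp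

/-- Key pointwise estimate assuming `‖b‖ ≤ ‖a‖`. -/
lemma key_pointwise {q : ℝ} (hq : 1 < q) (hq2 : q ≤ 2) {ε : ℝ} (hε : 0 < ε) (hε1 : ε < 1) :
    ∃ δ : ℝ, 0 < δ ∧ δ ≤ 1/2 ∧ ∀ p : ℝ, q ≤ p → ∀ a b : V,
      ε * ((‖a‖ ^ p + ‖b‖ ^ p) / 2) < ‖(2⁻¹:ℝ) • (a - b)‖ ^ p →
      ‖(2⁻¹:ℝ) • (a + b)‖ ^ p ≤ (1 - δ) * ((‖a‖ ^ p + ‖b‖ ^ p) / 2) := by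
  obtain ⟨δ, hδ0, hδhalf, hkey⟩ := key_scalar hq hq2 hε hε1
  have hδε : δ ≤ ε → True := fun _ => trivial
  refine ⟨min δ ε, lt_min hδ0 hε, le_trans (min_le_left _ _) hδhalf, ?_⟩
  -- main statement, first wlog on norms
  have main : ∀ p : ℝ, q ≤ p → ∀ a b : V, ‖b‖ ≤ ‖a‖ →
      ε * ((‖a‖ ^ p + ‖b‖ ^ p) / 2) < ‖(2⁻¹:ℝ) • (a - b)‖ ^ p →
      ‖(2⁻¹:ℝ) • (a + b)‖ ^ p ≤ (1 - min δ ε) * ((‖a‖ ^ p + ‖b‖ ^ p) / 2) := by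
    intro p hqp a b hba hyp
    have hp1 : 1 < p := lt_of_lt_of_le hq hqp
    have hp0 : 0 < p := by linarith
    have hM0 : (0:ℝ) ≤ (‖a‖ ^ p + ‖b‖ ^ p) / 2 := by positivity
    have hXst : ‖(2⁻¹:ℝ) • (a + b)‖ ≤ (‖a‖ + ‖b‖)/2 := by
      rw [norm_smul]
      simp only [norm_inv, Real.norm_ofNat]
      rw [inv_mul_le_iff₀ (by norm_num : (0:ℝ) < 2)]
      nlinarith [norm_add_le a b]
    rcases le_or_gt 2 p with hp2 | hp2
    · -- Clarkson
      have h := clarkson hp2 a b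
      have hd0 : (0:ℝ) ≤ ‖(2⁻¹:ℝ) • (a - b)‖ ^ p := Real.rpow_nonneg (norm_nonneg _) p
      have hδε' : min δ ε ≤ ε := min_le_right _ _
      nlinarith [mul_le_mul_of_nonneg_right hδε' hM0]
    · -- scalar case
      have hpar := para_half a b
      have h := hkey p hqp (le_of_lt hp2) ‖a‖ ‖b‖ ‖(2⁻¹:ℝ) • (a - b)‖ ‖(2⁻¹:ℝ) • (a + b)‖
        (norm_nonneg _) hba (norm_nonneg _) (norm_nonneg _) hXst (le_of_eq hpar) hyp
      have hδ' : min δ ε ≤ δ := min_le_left _ _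
      nlinarith
  intro p hqp a b hyp
  rcases le_total ‖b‖ ‖a‖ with hba | hba
  · exact main p hqp a b hba hyp
  · have e1 : ‖(2⁻¹:ℝ) • (a - b)‖ = ‖(2⁻¹:ℝ) • (b - a)‖ := by
      rw [← norm_neg]
      congr 1
      rw [← smul_neg]
      congr 1
      abel
    have e2 : a + b = b + a := add_comm a b
    rw [e1] at hyp
    rw [e2]
    have := main p hqp b a hba (by linarith [hyp])
    linarith [this]

end PW

lemma ofReal_half_add {a b : ℝ} (ha : 0 ≤ a) (hb : 0 ≤ b) :
    ENNReal.ofReal ((a + b)/2) = 2⁻¹ * (ENNReal.ofReal a + ENNReal.ofReal b) := by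
  rw [← ENNReal.ofReal_add ha hb, div_eq_inv_mul, ENNReal.ofReal_mul (by norm_num)]
  congr 1
  rw [ENNReal.ofReal_inv_of_pos (by norm_num : (0:ℝ) < 2)]
  norm_num

lemma norm_half_add_le {V : Type*} [NormedAddCommGroup V] [Module ℝ V] [NormSMulClass ℝ V]
    (a b : V) : ‖(2⁻¹:ℝ) • (a + b)‖ ≤ (‖a‖ + ‖b‖)/2 := by
  rw [norm_smul]
  simp only [norm_inv, Real.norm_ofNat]
  rw [inv_mul_le_iff₀ (by norm_num : (0:ℝ) < 2)]
  nlinarith [norm_add_le a b]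

lemma norm_half_sub_le {V : Type*} [NormedAddCommGroup V] [Module ℝ V] [NormSMulClass ℝ V]
    (a b : V) : ‖(2⁻¹:ℝ) • (a - b)‖ ≤ (‖a‖ + ‖b‖)/2 := by
  rw [norm_smul]
  simp only [norm_inv, Real.norm_ofNat]
  rw [inv_mul_le_iff₀ (by norm_num : (0:ℝ) < 2)]
  nlinarith [norm_sub_le a b]

/-- modular-form average bound: `φ(‖c‖) ≤ (φ(‖a‖)+φ(‖b‖))/2` in `ℝ≥0∞`. -/
lemma ofReal_phi_le {P : ℝ} (hP1 : 1 ≤ P) (hP0 : 0 < P) {A B C : ℝ}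
    (hA : 0 ≤ A) (hB : 0 ≤ B) (hC : 0 ≤ C) (h : C ≤ (A + B)/2) :
    ENNReal.ofReal (C ^ P / P) ≤
      2⁻¹ * (ENNReal.ofReal (A ^ P / P) + ENNReal.ofReal (B ^ P / P)) := by
  have h1 : C ^ P ≤ (A ^ P + B ^ P)/2 :=
    le_trans (Real.rpow_le_rpow hC h (by linarith)) (avg_rpow_le hA hB hP1)
  have h2 : C ^ P / P ≤ (A ^ P / P + B ^ P / P)/2 := by
    rw [← add_div, div_div]
    rw [div_le_div_iff₀ hP0 (by positivity)]
    nlinarith [h1, hP0]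
  calc ENNReal.ofReal (C ^ P / P) ≤ ENNReal.ofReal ((A ^ P / P + B ^ P / P)/2) :=
        ENNReal.ofReal_le_ofReal h2
    _ = 2⁻¹ * (ENNReal.ofReal (A ^ P / P) + ENNReal.ofReal (B ^ P / P)) :=
        ofReal_half_add (by positivity) (by positivity)


noncomputable def dirichletModular {n : ℕ} (Ω : Set (EuclideanSpace ℝ (Fin n)))
    (p : EuclideanSpace ℝ (Fin n) → ℝ)
    (h : EuclideanSpace ℝ (Fin n) → EuclideanSpace ℝ (Fin n)) : ℝ≥0∞ :=
  ∫⁻ x in Ω, ENNReal.ofReal (‖h x‖ ^ (p x) / p x)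

set_option maxHeartbeats 1000000 in
/-- Uniform convexity of the modular `ρ_p`: for a domain `Ω` and `p` continuous on `cl(Ω)` with
`inf_Ω p > 1`, for every `ε > 0` there is `0 < δ < 1` such that for all measurable `f, g` with
finite modular, `ρ_p((f-g)/2) > ε (ρ_p(f)+ρ_p(g))/2` implies
`ρ_p((f+g)/2) < (1-δ)(ρ_p(f)+ρ_p(g))/2`. -/
theorem dirichletModular_uniformly_convex {n : ℕ}
    (Ω : Set (EuclideanSpace ℝ (Fin n)))
    (hΩo : IsOpen Ω) (hΩc : IsConnected Ω)
    (p : EuclideanSpace ℝ (Fin n) → ℝ)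
    (hp : ContinuousOn p (closure Ω)) (hp1 : 1 < sInf (p '' Ω)) :
    ∀ ε : ℝ, 0 < ε → ∃ δ : ℝ, 0 < δ ∧ δ < 1 ∧
      ∀ f g : EuclideanSpace ℝ (Fin n) → EuclideanSpace ℝ (Fin n),
        Measurable f → Measurable g →
        dirichletModular Ω p f < ⊤ → dirichletModular Ω p g < ⊤ →
        ENNReal.ofReal ε * (dirichletModular Ω p f + dirichletModular Ω p g) / 2 <
            dirichletModular Ω p (fun x => (2⁻¹ : ℝ) • (f x - g x)) →
        dirichletModular Ω p (fun x => (2⁻¹ : ℝ) • (f x + g x)) <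
            ENNReal.ofReal (1 - δ) * (dirichletModular Ω p f + dirichletModular Ω p g) / 2 := by
  intro ε hε
  -- the minimal exponent
  have hbdd : BddBelow (p '' Ω) := by
    by_contra hb
    rw [Real.sInf_of_not_bddBelow hb] at hp1
    linarith
  have hqx : ∀ x ∈ Ω, sInf (p '' Ω) ≤ p x := fun x hx => csInf_le hbdd ⟨x, hx, rfl⟩
  set q : ℝ := min (sInf (p '' Ω)) 2 with hqdef
  have hq : 1 < q := lt_min hp1 one_lt_two
  have hq2 : q ≤ 2 := min_le_right _ _
  -- the pointwise threshold
  set ε₂ : ℝ := min (ε/2) (1/2) with hε₂def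
  have hε₂0 : 0 < ε₂ := lt_min (by linarith) (by norm_num)
  have hε₂1 : ε₂ < 1 := lt_of_le_of_lt (min_le_right _ _) (by norm_num)
  have hε₂ε : 2 * ε₂ ≤ ε := by
    have := min_le_left (ε/2) (1/2)
    rw [hε₂def]; linarith
  obtain ⟨δ, hδ0, hδhalf, hkey⟩ :=
    key_pointwise (V := EuclideanSpace ℝ (Fin n)) hq hq2 hε₂0 hε₂1
  refine ⟨min (δ * ε₂) (1/2), lt_min (by positivity) (by norm_num),
    lt_of_le_of_lt (min_le_right _ _) (by norm_num), ?_⟩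
  intro f g hf hg hA hB hyp
  set μ : Measure (EuclideanSpace ℝ (Fin n)) := volume.restrict Ω with hμdef
  -- measurable version of p
  have hpae : AEMeasurable p μ := (hp.mono subset_closure).aemeasurable hΩo.measurableSet
  set P : EuclideanSpace ℝ (Fin n) → ℝ := hpae.mk p with hPdef
  have hPm : Measurable P := hpae.measurable_mk
  have hPae : p =ᵐ[μ] P := hpae.ae_eq_mk
  have hmem : ∀ᵐ x ∂μ, x ∈ Ω := ae_restrict_mem hΩo.measurableSet
  have hPq : ∀ᵐ x ∂μ, q ≤ P x ∧ 0 < P x := by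
    filter_upwards [hmem, hPae] with x hx hx2
    rw [← hx2]
    exact ⟨le_trans (min_le_left _ _) (hqx x hx),
      by linarith [le_trans (min_le_left (sInf (p '' Ω)) 2) (hqx x hx)]⟩
  -- the four integrand functions (with measurable exponent P)
  set u : EuclideanSpace ℝ (Fin n) → ℝ≥0∞ :=
    fun x => ENNReal.ofReal (‖f x‖ ^ P x / P x) with hu
  set v : EuclideanSpace ℝ (Fin n) → ℝ≥0∞ :=
    fun x => ENNReal.ofReal (‖g x‖ ^ P x / P x) with hv
  set wp : EuclideanSpace ℝ (Fin n) → ℝ≥0∞ :=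
    fun x => ENNReal.ofReal (‖(2⁻¹:ℝ) • (f x + g x)‖ ^ P x / P x) with hwp
  set wm : EuclideanSpace ℝ (Fin n) → ℝ≥0∞ :=
    fun x => ENNReal.ofReal (‖(2⁻¹:ℝ) • (f x - g x)‖ ^ P x / P x) with hwm
  have hum : Measurable u := ((hf.norm.pow hPm).div hPm).ennreal_ofReal
  have hvm : Measurable v := ((hg.norm.pow hPm).div hPm).ennreal_ofReal
  -- modulars in terms of P
  have hAeq : dirichletModular Ω p f = ∫⁻ x, u x ∂μ := by
    rw [dirichletModular]
    exact lintegral_congr_ae (hPae.mono fun x hx => by simp only [hu]; rw [hx])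
  have hBeq : dirichletModular Ω p g = ∫⁻ x, v x ∂μ := by
    rw [dirichletModular]
    exact lintegral_congr_ae (hPae.mono fun x hx => by simp only [hv]; rw [hx])
  have hCeq : dirichletModular Ω p (fun x => (2⁻¹:ℝ) • (f x + g x)) = ∫⁻ x, wp x ∂μ := by
    rw [dirichletModular]
    exact lintegral_congr_ae (hPae.mono fun x hx => by simp only [hwp]; rw [hx])
  have hDeq : dirichletModular Ω p (fun x => (2⁻¹:ℝ) • (f x - g x)) = ∫⁻ x, wm x ∂μ := by
    rw [dirichletModular]
    exact lintegral_congr_ae (hPae.mono fun x hx => by simp only [hwm]; rw [hx])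
  -- the "bad" set where the difference is large
  set E : Set (EuclideanSpace ℝ (Fin n)) :=
    {x | ε₂ * ((‖f x‖ ^ P x + ‖g x‖ ^ P x)/2) < ‖(2⁻¹:ℝ) • (f x - g x)‖ ^ P x} with hE
  have hEm : MeasurableSet E := by
    apply measurableSet_lt
    · exact (((hf.norm.pow hPm).add (hg.norm.pow hPm)).div_const 2).const_mul ε₂
    · exact ((hf.sub hg).const_smul (2⁻¹:ℝ)).norm.pow hPm
  -- pointwise a.e. bounds
  have hconvm : ∀ᵐ x ∂μ, wm x ≤ 2⁻¹ * (u x + v x) := by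
    filter_upwards [hPq] with x hx
    exact ofReal_phi_le (by linarith [hx.1, hq]) hx.2 (norm_nonneg _) (norm_nonneg _)
      (norm_nonneg _) (norm_half_sub_le (f x) (g x))
  have hconvp : ∀ᵐ x ∂μ, wp x ≤ 2⁻¹ * (u x + v x) := by
    filter_upwards [hPq] with x hx
    exact ofReal_phi_le (by linarith [hx.1, hq]) hx.2 (norm_nonneg _) (norm_nonneg _)
      (norm_nonneg _) (norm_half_add_le (f x) (g x))
  have hEcbound : ∀ᵐ x ∂μ, x ∈ Eᶜ → wm x ≤ ENNReal.ofReal ε₂ * (2⁻¹ * (u x + v x)) := by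
    filter_upwards [hPq] with x hx hxE
    have hxE' : ‖(2⁻¹:ℝ) • (f x - g x)‖ ^ P x ≤ ε₂ * ((‖f x‖ ^ P x + ‖g x‖ ^ P x)/2) :=
      not_lt.1 hxE
    have hP0 := hx.2
    have h2 : ‖(2⁻¹:ℝ) • (f x - g x)‖ ^ P x / P x
        ≤ ε₂ * ((‖f x‖ ^ P x / P x + ‖g x‖ ^ P x / P x)/2) := by
      have hPinv : 0 ≤ (P x)⁻¹ := inv_nonneg.2 (le_of_lt hP0)
      calc ‖(2⁻¹:ℝ) • (f x - g x)‖ ^ P x / P x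
          = ‖(2⁻¹:ℝ) • (f x - g x)‖ ^ P x * (P x)⁻¹ := div_eq_mul_inv _ _
        _ ≤ (ε₂ * ((‖f x‖ ^ P x + ‖g x‖ ^ P x)/2)) * (P x)⁻¹ :=
            mul_le_mul_of_nonneg_right hxE' hPinv
        _ = ε₂ * ((‖f x‖ ^ P x / P x + ‖g x‖ ^ P x / P x)/2) := by
            simp only [div_eq_mul_inv]
            ring
    calc wm x ≤ ENNReal.ofReal (ε₂ * ((‖f x‖ ^ P x / P x + ‖g x‖ ^ P x / P x)/2)) :=
          ENNReal.ofReal_le_ofReal h2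
      _ = ENNReal.ofReal ε₂ *
          ENNReal.ofReal ((‖f x‖ ^ P x / P x + ‖g x‖ ^ P x / P x)/2) :=
          ENNReal.ofReal_mul (le_of_lt hε₂0)
      _ = ENNReal.ofReal ε₂ * (2⁻¹ * (u x + v x)) := by
          rw [ofReal_half_add (by positivity) (by positivity)]
  have hEbound : ∀ᵐ x ∂μ, x ∈ E → wp x ≤ ENNReal.ofReal (1 - δ) * (2⁻¹ * (u x + v x)) := by
    filter_upwards [hPq] with x hx hxE
    have hP0 := hx.2
    have hkx := hkey (P x) hx.1 (f x) (g x) hxE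
    have h2 : ‖(2⁻¹:ℝ) • (f x + g x)‖ ^ P x / P x
        ≤ (1 - δ) * ((‖f x‖ ^ P x / P x + ‖g x‖ ^ P x / P x)/2) := by
      have hPinv : 0 ≤ (P x)⁻¹ := inv_nonneg.2 (le_of_lt hP0)
      calc ‖(2⁻¹:ℝ) • (f x + g x)‖ ^ P x / P x
          = ‖(2⁻¹:ℝ) • (f x + g x)‖ ^ P x * (P x)⁻¹ := div_eq_mul_inv _ _
        _ ≤ ((1 - δ) * ((‖f x‖ ^ P x + ‖g x‖ ^ P x)/2)) * (P x)⁻¹ :=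
            mul_le_mul_of_nonneg_right hkx hPinv
        _ = (1 - δ) * ((‖f x‖ ^ P x / P x + ‖g x‖ ^ P x / P x)/2) := by
            simp only [div_eq_mul_inv]
            ring
    calc wp x ≤ ENNReal.ofReal ((1 - δ) * ((‖f x‖ ^ P x / P x + ‖g x‖ ^ P x / P x)/2)) :=
          ENNReal.ofReal_le_ofReal h2
      _ = ENNReal.ofReal (1 - δ) *
          ENNReal.ofReal ((‖f x‖ ^ P x / P x + ‖g x‖ ^ P x / P x)/2) :=
          ENNReal.ofReal_mul (by linarith)
      _ = ENNReal.ofReal (1 - δ) * (2⁻¹ * (u x + v x)) := by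
          rw [ofReal_half_add (by positivity) (by positivity)]
  -- integral bookkeeping
  have hsplitT : (∫⁻ x in E, (u x + v x) ∂μ) + (∫⁻ x in Eᶜ, (u x + v x) ∂μ)
      = dirichletModular Ω p f + dirichletModular Ω p g := by
    rw [lintegral_add_compl (fun x => u x + v x) hEm, lintegral_add_left hum, hAeq, hBeq]
  have hTtop : dirichletModular Ω p f + dirichletModular Ω p g ≠ ⊤ :=
    (ENNReal.add_lt_top.2 ⟨hA, hB⟩).ne
  have hXle : (∫⁻ x in E, (u x + v x) ∂μ) ≤ dirichletModular Ω p f + dirichletModular Ω p g :=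
    hsplitT ▸ le_self_add
  have hYle : (∫⁻ x in Eᶜ, (u x + v x) ∂μ) ≤ dirichletModular Ω p f + dirichletModular Ω p g :=
    hsplitT ▸ le_add_self
  have hXtop : (∫⁻ x in E, (u x + v x) ∂μ) ≠ ⊤ := (lt_of_le_of_lt hXle
    (lt_of_le_of_ne le_top hTtop)).ne
  have hYtop : (∫⁻ x in Eᶜ, (u x + v x) ∂μ) ≠ ⊤ := (lt_of_le_of_lt hYle
    (lt_of_le_of_ne le_top hTtop)).ne
  -- D ≤ 2⁻¹ X + ofReal ε₂ * (2⁻¹ Y)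
  have hD1 : (∫⁻ x in E, wm x ∂μ) ≤ 2⁻¹ * ∫⁻ x in E, (u x + v x) ∂μ := by
    rw [← lintegral_const_mul' _ _ (by simp : (2⁻¹:ℝ≥0∞) ≠ ⊤)]
    exact lintegral_mono_ae (ae_restrict_of_ae hconvm)
  have hD2 : (∫⁻ x in Eᶜ, wm x ∂μ) ≤
      ENNReal.ofReal ε₂ * (2⁻¹ * ∫⁻ x in Eᶜ, (u x + v x) ∂μ) := by
    rw [← mul_assoc, ← lintegral_const_mul' _ _
      (by simp [ENNReal.mul_eq_top] : (ENNReal.ofReal ε₂ * 2⁻¹ : ℝ≥0∞) ≠ ⊤)]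
    refine lintegral_mono_ae ?_
    filter_upwards [(ae_restrict_iff' hEm.compl).2 hEcbound] with x hx
    rw [← mul_assoc] at hx
    exact hx
  have hDle : dirichletModular Ω p (fun x => (2⁻¹:ℝ) • (f x - g x)) ≤
      2⁻¹ * (∫⁻ x in E, (u x + v x) ∂μ) +
      ENNReal.ofReal ε₂ * (2⁻¹ * ∫⁻ x in Eᶜ, (u x + v x) ∂μ) := by
    rw [hDeq, ← lintegral_add_compl (fun x => wm x) hEm]
    exact add_le_add hD1 hD2
  -- T ≠ 0
  have hDT : dirichletModular Ω p (fun x => (2⁻¹:ℝ) • (f x - g x)) ≤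
      2⁻¹ * (dirichletModular Ω p f + dirichletModular Ω p g) := by
    rw [hDeq, hAeq, hBeq, ← lintegral_add_left hum,
      ← lintegral_const_mul' _ _ (by simp : (2⁻¹:ℝ≥0∞) ≠ ⊤)]
    exact lintegral_mono_ae hconvm
  have hTne : dirichletModular Ω p f + dirichletModular Ω p g ≠ 0 := by
    intro h0
    rw [h0] at hyp hDT
    have hD0 : dirichletModular Ω p (fun x => (2⁻¹:ℝ) • (f x - g x)) = 0 :=
      le_antisymm (by simpa using hDT) (zero_le)
    rw [hD0] at hyp
    exact absurd hyp (by simp)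
  -- strict lower bound for the integral over E
  have h2ε : ENNReal.ofReal ε₂ + ENNReal.ofReal ε₂ ≤ ENNReal.ofReal ε := by
    rw [← ENNReal.ofReal_add (le_of_lt hε₂0) (le_of_lt hε₂0)]
    exact ENNReal.ofReal_le_ofReal (by linarith)
  have hcne : ENNReal.ofReal ε₂ *
      (2⁻¹ * (dirichletModular Ω p f + dirichletModular Ω p g)) ≠ ⊤ :=
    ENNReal.mul_ne_top ENNReal.ofReal_ne_top
      (ENNReal.mul_ne_top (by simp) hTtop)
  have hstep1 : ENNReal.ofReal ε₂ * (2⁻¹ * ∫⁻ x in Eᶜ, (u x + v x) ∂μ) ≤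
      ENNReal.ofReal ε₂ * (2⁻¹ * (dirichletModular Ω p f + dirichletModular Ω p g)) := by
    gcongr
  have hstep2 : ENNReal.ofReal ε₂ *
        (2⁻¹ * (dirichletModular Ω p f + dirichletModular Ω p g)) +
      ENNReal.ofReal ε₂ * (2⁻¹ * (dirichletModular Ω p f + dirichletModular Ω p g)) ≤
      ENNReal.ofReal ε * (dirichletModular Ω p f + dirichletModular Ω p g) / 2 := by
    rw [div_eq_mul_inv, ← add_mul]
    calc (ENNReal.ofReal ε₂ + ENNReal.ofReal ε₂) *
          (2⁻¹ * (dirichletModular Ω p f + dirichletModular Ω p g))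
        ≤ ENNReal.ofReal ε * (2⁻¹ * (dirichletModular Ω p f + dirichletModular Ω p g)) :=
          mul_le_mul_left h2ε _
      _ = ENNReal.ofReal ε * (dirichletModular Ω p f + dirichletModular Ω p g) * 2⁻¹ := by
          rw [mul_comm (2⁻¹:ℝ≥0∞), ← mul_assoc]
  have hchain : ENNReal.ofReal ε₂ *
        (2⁻¹ * (dirichletModular Ω p f + dirichletModular Ω p g)) +
      ENNReal.ofReal ε₂ * (2⁻¹ * (dirichletModular Ω p f + dirichletModular Ω p g)) <
      2⁻¹ * (∫⁻ x in E, (u x + v x) ∂μ) +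
      ENNReal.ofReal ε₂ * (2⁻¹ * (dirichletModular Ω p f + dirichletModular Ω p g)) :=
    lt_of_le_of_lt hstep2 (lt_of_lt_of_le hyp
      (hDle.trans (add_le_add_right hstep1 _)))
  have hXlow : ENNReal.ofReal ε₂ *
      (2⁻¹ * (dirichletModular Ω p f + dirichletModular Ω p g)) <
      2⁻¹ * (∫⁻ x in E, (u x + v x) ∂μ) :=
    (ENNReal.add_lt_add_iff_right hcne).1 hchain
  -- bound for the sum modular
  have hC1 : (∫⁻ x in E, wp x ∂μ) ≤
      ENNReal.ofReal (1 - δ) * (2⁻¹ * ∫⁻ x in E, (u x + v x) ∂μ) := by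
    rw [← mul_assoc, ← lintegral_const_mul' _ _
      (by simp [ENNReal.mul_eq_top] : (ENNReal.ofReal (1-δ) * 2⁻¹ : ℝ≥0∞) ≠ ⊤)]
    refine lintegral_mono_ae ?_
    filter_upwards [(ae_restrict_iff' hEm).2 hEbound] with x hx
    rw [← mul_assoc] at hx
    exact hx
  have hC2 : (∫⁻ x in Eᶜ, wp x ∂μ) ≤ 2⁻¹ * ∫⁻ x in Eᶜ, (u x + v x) ∂μ := by
    rw [← lintegral_const_mul' _ _ (by simp : (2⁻¹:ℝ≥0∞) ≠ ⊤)]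
    exact lintegral_mono_ae (ae_restrict_of_ae hconvp)
  have hCle : dirichletModular Ω p (fun x => (2⁻¹:ℝ) • (f x + g x)) ≤
      ENNReal.ofReal (1 - δ) * (2⁻¹ * ∫⁻ x in E, (u x + v x) ∂μ) +
      2⁻¹ * ∫⁻ x in Eᶜ, (u x + v x) ∂μ := by
    rw [hCeq, ← lintegral_add_compl (fun x => wp x) hEm]
    exact add_le_add hC1 hC2
  -- pass to real numbers
  have hτ0 : 0 < (dirichletModular Ω p f + dirichletModular Ω p g).toReal :=
    ENNReal.toReal_pos hTne hTtop
  have hxy : (∫⁻ x in E, (u x + v x) ∂μ).toReal + (∫⁻ x in Eᶜ, (u x + v x) ∂μ).toReal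
      = (dirichletModular Ω p f + dirichletModular Ω p g).toReal := by
    rw [← ENNReal.toReal_add hXtop hYtop, hsplitT]
  have hXne2 : (2⁻¹ * ∫⁻ x in E, (u x + v x) ∂μ : ℝ≥0∞) ≠ ⊤ :=
    ENNReal.mul_ne_top (by simp) hXtop
  have hxlowR : ε₂ * (2⁻¹ * (dirichletModular Ω p f + dirichletModular Ω p g).toReal)
      < 2⁻¹ * (∫⁻ x in E, (u x + v x) ∂μ).toReal := by
    have h := (ENNReal.toReal_lt_toReal hcne hXne2).2 hXlow
    rwa [ENNReal.toReal_mul, ENNReal.toReal_mul, ENNReal.toReal_mul,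
      ENNReal.toReal_ofReal (le_of_lt hε₂0), ENNReal.toReal_inv,
      ENNReal.toReal_ofNat] at h
  -- final comparison
  have hδfin1 : min (δ * ε₂) (1/2) ≤ 1/2 := min_le_right _ _
  have hRne : (ENNReal.ofReal (1 - δ) * (2⁻¹ * ∫⁻ x in E, (u x + v x) ∂μ) +
      2⁻¹ * ∫⁻ x in Eᶜ, (u x + v x) ∂μ : ℝ≥0∞) ≠ ⊤ :=
    ENNReal.add_ne_top.2 ⟨ENNReal.mul_ne_top ENNReal.ofReal_ne_top hXne2,
      ENNReal.mul_ne_top (by simp) hYtop⟩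
  have hGne : (ENNReal.ofReal (1 - min (δ * ε₂) (1/2)) *
      (dirichletModular Ω p f + dirichletModular Ω p g) / 2 : ℝ≥0∞) ≠ ⊤ := by
    rw [div_eq_mul_inv]
    exact ENNReal.mul_ne_top (ENNReal.mul_ne_top ENNReal.ofReal_ne_top hTtop) (by simp)
  refine lt_of_le_of_lt hCle ((ENNReal.toReal_lt_toReal hRne hGne).1 ?_)
  rw [ENNReal.toReal_add (ENNReal.mul_ne_top ENNReal.ofReal_ne_top hXne2)
      (ENNReal.mul_ne_top (by simp) hYtop)]
  simp only [ENNReal.toReal_div, ENNReal.toReal_mul, ENNReal.toReal_inv,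
    ENNReal.toReal_ofReal (by linarith : (0:ℝ) ≤ 1 - δ),
    ENNReal.toReal_ofReal (by linarith [hδfin1] : (0:ℝ) ≤ 1 - min (δ * ε₂) (1/2)),
    ENNReal.toReal_ofNat]
  have p1 : δ * (ε₂ * (2⁻¹ * (dirichletModular Ω p f + dirichletModular Ω p g).toReal))
      < δ * (2⁻¹ * (∫⁻ x in E, (u x + v x) ∂μ).toReal) :=
    mul_lt_mul_of_pos_left hxlowR hδ0
  have p2 : min (δ * ε₂) (1/2) * (dirichletModular Ω p f + dirichletModular Ω p g).toReal
      ≤ δ * ε₂ * (dirichletModular Ω p f + dirichletModular Ω p g).toReal :=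
    mul_le_mul_of_nonneg_right (min_le_left _ _) (le_of_lt hτ0)
  linarith [p1, p2, hxy]
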